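/- arXiv:1512.03812 — 4 statements merged into one kernel-verified Lean document; each statement's English description precedes it below -/
import Mathlib

section
/- Let A and B be elements of a Banach algebra. Then the leap-frog (Strang) composition Δ(h) = exp((h/2)B)·exp(hA)·exp((h/2)B) is a second-order approximation of the exact exponential: ‖Δ(h) − exp(h(A+B))‖ = O(h³) as h → 0, i.e., there exist constants C > 0 and δ > 0 such that ‖Δ(h) − exp(h(A+B))‖ ≤ C·h³ for all 0 < h < δ. -/
open NormedSpace

section Aux
open Nat
set_option linter.unusedSectionVars false

variable {𝒜 : Type*} [NormedRing 𝒜] [NormedAlgebra ℝ 𝒜] [CompleteSpace 𝒜]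



lemma real_exp_tsum (t : ℝ) : ∑' n : ℕ, t ^ n / n ! = Real.exp t := by
  rw [Real.exp_eq_exp_ℝ, exp_eq_tsum_div]

lemma norm_term_le (x : 𝒜) (n : ℕ) :
    ‖((n ! : ℝ)⁻¹) • x ^ n‖ ≤ (‖(1:𝒜)‖ + 1) * (‖x‖ ^ n / n !) := by
  have h1 : (0:ℝ) ≤ ‖(1:𝒜)‖ := norm_nonneg _
  rw [norm_smul, Real.norm_eq_abs, abs_of_nonneg (by positivity)]
  rcases Nat.eq_zero_or_pos n with rfl | hn
  · simp
  · have hx : ‖x ^ n‖ ≤ ‖x‖ ^ n := norm_pow_le' x hn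
    have hf : (0:ℝ) < (n ! : ℝ) := by positivity
    calc ((n:ℕ) ! : ℝ)⁻¹ * ‖x ^ n‖ ≤ ((n:ℕ) ! : ℝ)⁻¹ * ‖x‖ ^ n := by gcongr
      _ = ‖x‖ ^ n / n ! := by rw [inv_mul_eq_div]
      _ ≤ (‖(1:𝒜)‖ + 1) * (‖x‖ ^ n / n !) :=
          le_mul_of_one_le_left (by positivity) (by linarith)

lemma norm_exp_le_K (x : 𝒜) : ‖exp x‖ ≤ (‖(1:𝒜)‖ + 1) * Real.exp ‖x‖ := by
  rw [exp_eq_tsum ℝ]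
  have h1 := norm_tsum_le_tsum_norm (f := fun n => ((n ! : ℝ)⁻¹) • x ^ n)
    (norm_expSeries_summable' x)
  refine h1.trans ?_
  have h2 : ∑' n : ℕ, ‖((n ! : ℝ)⁻¹) • x ^ n‖
      ≤ ∑' n : ℕ, (‖(1:𝒜)‖ + 1) * (‖x‖ ^ n / n !) :=
    Summable.tsum_le_tsum (norm_term_le x) (norm_expSeries_summable' x)
      ((expSeries_div_summable (𝔸 := ℝ) ‖x‖).mul_left _)
  refine h2.trans ?_
  rw [tsum_mul_left, real_exp_tsum]

lemma norm_poly_le (x : 𝒜) :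
    ‖1 + x + (2:ℝ)⁻¹ • (x * x)‖ ≤ (‖(1:𝒜)‖ + 1) * Real.exp ‖x‖ := by
  have h1 : ‖1 + x + (2:ℝ)⁻¹ • (x * x)‖ ≤ ‖(1:𝒜)‖ + ‖x‖ + ‖x‖ * ‖x‖ / 2 := by
    refine (norm_add_le _ _).trans ?_
    have := norm_add_le (1:𝒜) x
    have h2 : ‖(2:ℝ)⁻¹ • (x * x)‖ ≤ ‖x‖ * ‖x‖ / 2 := by
      rw [norm_smul, Real.norm_eq_abs, abs_of_nonneg (by norm_num)]
      have := norm_mul_le x x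
      nlinarith
    linarith
  refine h1.trans ?_
  have h3 : 1 + ‖x‖ + ‖x‖ ^ 2 / 2 ≤ Real.exp ‖x‖ := by
    have := Real.sum_le_exp_of_nonneg (norm_nonneg x) 3
    simp [Finset.sum_range_succ] at this
    nlinarith [this]
  have hx : (0:ℝ) ≤ ‖x‖ := norm_nonneg x
  have h1' : (0:ℝ) ≤ ‖(1:𝒜)‖ := norm_nonneg _
  have hexp : (1:ℝ) ≤ Real.exp ‖x‖ := Real.one_le_exp hx
  nlinarith [sq_nonneg ‖x‖]

lemma norm_exp_sub_poly (x : 𝒜) :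
    ‖exp x - (1 + x + (2:ℝ)⁻¹ • (x * x))‖ ≤ ‖x‖ ^ 3 * Real.exp ‖x‖ := by
  have hs := expSeries_summable' (𝕂 := ℝ) x
  have hpartial : ∑ n ∈ Finset.range 3, ((n ! : ℝ)⁻¹) • x ^ n
      = 1 + x + (2:ℝ)⁻¹ • (x * x) := by
    simp [Finset.sum_range_succ, Nat.factorial, pow_succ]
  have heq : exp x - (1 + x + (2:ℝ)⁻¹ • (x * x))
      = ∑' n : ℕ, (((n + 3) ! : ℝ)⁻¹) • x ^ (n + 3) := by
    simp only [exp_eq_tsum ℝ]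
    rw [← hpartial, ← Summable.sum_add_tsum_nat_add 3 hs]
    abel
  rw [heq]
  have hsn : Summable fun n : ℕ => ‖(((n + 3) ! : ℝ)⁻¹) • x ^ (n + 3)‖ :=
    (summable_nat_add_iff 3).2 (norm_expSeries_summable' x)
  refine (norm_tsum_le_tsum_norm hsn).trans ?_
  have hterm : ∀ n : ℕ, ‖(((n + 3) ! : ℝ)⁻¹) • x ^ (n + 3)‖
      ≤ ‖x‖ ^ 3 * (‖x‖ ^ n / n !) := by
    intro n
    rw [norm_smul, Real.norm_eq_abs, abs_of_nonneg (by positivity)]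
    have hx : ‖x ^ (n + 3)‖ ≤ ‖x‖ ^ (n + 3) := norm_pow_le' x (by omega)
    have hfle : ((n ! : ℝ)) ≤ ((n + 3) ! : ℝ) :=
      Nat.cast_le.2 (Nat.factorial_le (by omega))
    have hf : (0:ℝ) < (n ! : ℝ) := by positivity
    have hf3 : (0:ℝ) < ((n + 3) ! : ℝ) := by positivity
    have hinv : (((n + 3) ! : ℝ))⁻¹ ≤ ((n ! : ℝ))⁻¹ := by
      exact inv_anti₀ hf hfle
    calc (((n + 3) ! : ℝ))⁻¹ * ‖x ^ (n + 3)‖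
        ≤ (((n + 3) ! : ℝ))⁻¹ * ‖x‖ ^ (n + 3) := by gcongr
      _ ≤ ((n ! : ℝ))⁻¹ * ‖x‖ ^ (n + 3) :=
          mul_le_mul_of_nonneg_right hinv (by positivity)
      _ = ‖x‖ ^ 3 * (‖x‖ ^ n / n !) := by
          rw [pow_add]
          field_simp
  refine (Summable.tsum_le_tsum hterm hsn ((expSeries_div_summable (𝔸 := ℝ) ‖x‖).mul_left _)).trans ?_
  rw [tsum_mul_left, real_exp_tsum]


lemma poly_id (A B : 𝒜) (h : ℝ) :
    (1 + (h/2) • B + (2:ℝ)⁻¹ • (((h/2) • B) * ((h/2) • B)))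
      * (1 + h • A + (2:ℝ)⁻¹ • ((h • A) * (h • A)))
      * (1 + (h/2) • B + (2:ℝ)⁻¹ • (((h/2) • B) * ((h/2) • B)))
    - (1 + h • (A + B) + (2:ℝ)⁻¹ • ((h • (A + B)) * (h • (A + B))))
    = h^3 • ((1/4 : ℝ) • (A*A*B) + (1/8 : ℝ) • (A*B*B) + (1/4 : ℝ) • (B*A*A)
        + (1/4 : ℝ) • (B*A*B) + (1/8 : ℝ) • (B*B*A) + (1/8 : ℝ) • (B*B*B))
    + h^4 • ((1/16 : ℝ) • (A*A*B*B) + (1/8 : ℝ) • (B*A*A*B) + (1/16 : ℝ) • (B*A*B*B)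
        + (1/16 : ℝ) • (B*B*A*A) + (1/16 : ℝ) • (B*B*A*B) + (1/64 : ℝ) • (B*B*B*B))
    + h^5 • ((1/32 : ℝ) • (B*A*A*B*B) + (1/32 : ℝ) • (B*B*A*A*B)
        + (1/64 : ℝ) • (B*B*A*B*B))
    + h^6 • ((1/128 : ℝ) • (B*B*A*A*B*B)) := by
  simp only [mul_add, add_mul, smul_mul_assoc, mul_smul_comm, smul_smul, smul_add,
    mul_one, one_mul, mul_assoc]
  module

lemma norm_exp_sub_poly' {x : 𝒜} {r E : ℝ} (hx : ‖x‖ ≤ r) (hE : Real.exp r ≤ E) :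
    ‖exp x - (1 + x + (2:ℝ)⁻¹ • (x * x))‖ ≤ r ^ 3 * E := by
  refine (norm_exp_sub_poly x).trans ?_
  have h1 : Real.exp ‖x‖ ≤ E := (Real.exp_le_exp.2 hx).trans hE
  have h2 : ‖x‖ ^ 3 ≤ r ^ 3 := pow_le_pow_left₀ (norm_nonneg x) hx 3
  have := (Real.exp_pos ‖x‖).le
  nlinarith [pow_nonneg (norm_nonneg x) 3, Real.exp_pos ‖x‖]

lemma norm_exp_le_K' {x : 𝒜} {r E : ℝ} (hx : ‖x‖ ≤ r) (hE : Real.exp r ≤ E) :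
    ‖exp x‖ ≤ (‖(1:𝒜)‖ + 1) * E := by
  refine (norm_exp_le_K x).trans ?_
  have h1 : Real.exp ‖x‖ ≤ E := (Real.exp_le_exp.2 hx).trans hE
  have : (0:ℝ) ≤ ‖(1:𝒜)‖ + 1 := by positivity
  nlinarith

lemma norm_poly_le' {x : 𝒜} {r E : ℝ} (hx : ‖x‖ ≤ r) (hE : Real.exp r ≤ E) :
    ‖1 + x + (2:ℝ)⁻¹ • (x * x)‖ ≤ (‖(1:𝒜)‖ + 1) * E := by
  refine (norm_poly_le x).trans ?_
  have h1 : Real.exp ‖x‖ ≤ E := (Real.exp_le_exp.2 hx).trans hE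
  have : (0:ℝ) ≤ ‖(1:𝒜)‖ + 1 := by positivity
  nlinarith

end Aux

set_option maxHeartbeats 1000000 in
/-- The leap-frog (Strang) composition `Δ(h) = exp((h/2)B)·exp(hA)·exp((h/2)B)` is a
second-order approximation of `exp(h(A+B))`: the error is `O(h³)` as `h → 0`. -/
theorem leapfrog_second_order {𝒜 : Type*} [NormedRing 𝒜] [NormedAlgebra ℝ 𝒜]
    [CompleteSpace 𝒜] (A B : 𝒜) :
    ∃ C > (0 : ℝ), ∃ δ > (0 : ℝ), ∀ h : ℝ, 0 < h → h < δ →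
      ‖exp ((h / 2) • B) * exp (h • A) * exp ((h / 2) • B)
          - exp (h • (A + B))‖ ≤ C * h ^ 3 := by
  set K : ℝ := ‖(1:𝒜)‖ + 1 with hKdef
  set R : ℝ := ‖A‖ + ‖B‖ + 1 with hRdef
  set E : ℝ := Real.exp R with hEdef
  set M3 : 𝒜 := (1/4 : ℝ) • (A*A*B) + (1/8 : ℝ) • (A*B*B) + (1/4 : ℝ) • (B*A*A)
      + (1/4 : ℝ) • (B*A*B) + (1/8 : ℝ) • (B*B*A) + (1/8 : ℝ) • (B*B*B) with hM3
  set M4 : 𝒜 := (1/16 : ℝ) • (A*A*B*B) + (1/8 : ℝ) • (B*A*A*B) + (1/16 : ℝ) • (B*A*B*B)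
      + (1/16 : ℝ) • (B*B*A*A) + (1/16 : ℝ) • (B*B*A*B) + (1/64 : ℝ) • (B*B*B*B) with hM4
  set M5 : 𝒜 := (1/32 : ℝ) • (B*A*A*B*B) + (1/32 : ℝ) • (B*B*A*A*B)
      + (1/64 : ℝ) • (B*B*A*B*B) with hM5
  set M6 : 𝒜 := (1/128 : ℝ) • (B*B*A*A*B*B) with hM6
  set CM : ℝ := ‖M3‖ + ‖M4‖ + ‖M5‖ + ‖M6‖ with hCM
  have hE1 : (1:ℝ) ≤ E := Real.one_le_exp (by positivity)
  have hK1 : (1:ℝ) ≤ K := by rw [hKdef]; linarith [norm_nonneg (1:𝒜)]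
  refine ⟨3 * (R^3 * E) * ((K*E) * (K*E)) + R^3 * E + CM + 1, by positivity, 1, one_pos, ?_⟩
  intro h h0 h1
  -- abbreviations
  set a : 𝒜 := h • A with ha
  set b : 𝒜 := (h/2) • B with hb
  set c : 𝒜 := h • (A + B) with hc
  set Pa : 𝒜 := 1 + a + (2:ℝ)⁻¹ • (a * a) with hPa
  set Pb : 𝒜 := 1 + b + (2:ℝ)⁻¹ • (b * b) with hPb
  set Pc : 𝒜 := 1 + c + (2:ℝ)⁻¹ • (c * c) with hPc
  have hna : ‖a‖ ≤ h * R := by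
    rw [ha, norm_smul, Real.norm_eq_abs, abs_of_pos h0]
    have : ‖A‖ ≤ R := by rw [hRdef]; linarith [norm_nonneg B]
    nlinarith
  have hnb : ‖b‖ ≤ h * R := by
    rw [hb, norm_smul, Real.norm_eq_abs, abs_of_pos (by linarith : (0:ℝ) < h/2)]
    have : ‖B‖ ≤ R := by rw [hRdef]; linarith [norm_nonneg A]
    nlinarith [norm_nonneg B]
  have hnc : ‖c‖ ≤ h * R := by
    rw [hc, norm_smul, Real.norm_eq_abs, abs_of_pos h0]
    have : ‖A + B‖ ≤ R := by
      refine (norm_add_le A B).trans ?_; rw [hRdef]; linarith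
    nlinarith [norm_nonneg (A + B)]
  have hR0 : (0:ℝ) < R := by positivity
  have hhR : h * R ≤ R := by nlinarith
  have hexpE : Real.exp (h * R) ≤ E := by rw [hEdef]; exact Real.exp_le_exp.2 hhR
  -- exponential and polynomial bounds
  have hEa : ‖exp a‖ ≤ K * E := norm_exp_le_K' hna hexpE
  have hEb : ‖exp b‖ ≤ K * E := norm_exp_le_K' hnb hexpE
  have hPbn : ‖Pb‖ ≤ K * E := norm_poly_le' hnb hexpE
  have hPan : ‖Pa‖ ≤ K * E := norm_poly_le' hna hexpE
  have hDa : ‖exp a - Pa‖ ≤ (h*R)^3 * E := norm_exp_sub_poly' hna hexpE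
  have hDb : ‖exp b - Pb‖ ≤ (h*R)^3 * E := norm_exp_sub_poly' hnb hexpE
  have hDc : ‖Pc - exp c‖ ≤ (h*R)^3 * E := by
    rw [← norm_neg, neg_sub]; exact norm_exp_sub_poly' hnc hexpE
  -- polynomial identity
  have hpoly : Pb * Pa * Pb - Pc = h^3 • M3 + h^4 • M4 + h^5 • M5 + h^6 • M6 := by
    rw [hPa, hPb, hPc, ha, hb, hc, hM3, hM4, hM5, hM6]
    exact poly_id A B h
  have hpolybound : ‖Pb * Pa * Pb - Pc‖ ≤ h^3 * CM := by
    rw [hpoly, hCM]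
    have e3 : ‖h^3 • M3‖ = h^3 * ‖M3‖ := by
      rw [norm_smul, Real.norm_eq_abs, abs_of_pos (by positivity)]
    have e4 : ‖h^4 • M4‖ ≤ h^3 * ‖M4‖ := by
      rw [norm_smul, Real.norm_eq_abs, abs_of_pos (by positivity)]
      have : h^4 ≤ h^3 := pow_le_pow_of_le_one h0.le h1.le (by norm_num)
      exact mul_le_mul_of_nonneg_right this (norm_nonneg _)
    have e5 : ‖h^5 • M5‖ ≤ h^3 * ‖M5‖ := by
      rw [norm_smul, Real.norm_eq_abs, abs_of_pos (by positivity)]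
      have : h^5 ≤ h^3 := pow_le_pow_of_le_one h0.le h1.le (by norm_num)
      exact mul_le_mul_of_nonneg_right this (norm_nonneg _)
    have e6 : ‖h^6 • M6‖ ≤ h^3 * ‖M6‖ := by
      rw [norm_smul, Real.norm_eq_abs, abs_of_pos (by positivity)]
      have : h^6 ≤ h^3 := pow_le_pow_of_le_one h0.le h1.le (by norm_num)
      exact mul_le_mul_of_nonneg_right this (norm_nonneg _)
    calc ‖h^3 • M3 + h^4 • M4 + h^5 • M5 + h^6 • M6‖
        ≤ ‖h^3 • M3‖ + ‖h^4 • M4‖ + ‖h^5 • M5‖ + ‖h^6 • M6‖ := by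
          refine (norm_add_le _ _).trans ?_
          have t1 := norm_add_le (h^3 • M3 + h^4 • M4) (h^5 • M5)
          have t2 := norm_add_le (h^3 • M3) (h^4 • M4)
          linarith
      _ ≤ h^3 * ‖M3‖ + h^3 * ‖M4‖ + h^3 * ‖M5‖ + h^3 * ‖M6‖ := by
          rw [e3]; linarith
      _ = h^3 * (‖M3‖ + ‖M4‖ + ‖M5‖ + ‖M6‖) := by ring
  -- splitting
  have hsplit : exp b * exp a * exp b - exp c
      = (exp b - Pb) * (exp a * exp b)
        + Pb * ((exp a - Pa) * exp b)
        + (Pb * Pa) * (exp b - Pb)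
        + (Pb * Pa * Pb - Pc)
        + (Pc - exp c) := by noncomm_ring
  rw [hsplit]
  have hKE0 : (0:ℝ) ≤ K * E := by positivity
  have hcube : (h*R)^3 * E = h^3 * (R^3 * E) := by ring
  have T1 : ‖(exp b - Pb) * (exp a * exp b)‖ ≤ h^3 * (R^3 * E) * ((K*E)*(K*E)) := by
    refine (norm_mul_le _ _).trans ?_
    have h2 : ‖exp a * exp b‖ ≤ (K*E)*(K*E) := by
      refine (norm_mul_le _ _).trans ?_
      exact mul_le_mul hEa hEb (norm_nonneg _) hKE0
    rw [← hcube]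
    exact mul_le_mul hDb h2 (norm_nonneg _) (by positivity)
  have T2 : ‖Pb * ((exp a - Pa) * exp b)‖ ≤ h^3 * (R^3 * E) * ((K*E)*(K*E)) := by
    refine (norm_mul_le _ _).trans ?_
    have h2 : ‖(exp a - Pa) * exp b‖ ≤ ((h*R)^3 * E) * (K*E) := by
      refine (norm_mul_le _ _).trans ?_
      exact mul_le_mul hDa hEb (norm_nonneg _) (by positivity)
    calc ‖Pb‖ * ‖(exp a - Pa) * exp b‖
        ≤ (K*E) * (((h*R)^3 * E) * (K*E)) :=
          mul_le_mul hPbn h2 (norm_nonneg _) hKE0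
      _ = h^3 * (R^3 * E) * ((K*E)*(K*E)) := by ring
  have T3 : ‖(Pb * Pa) * (exp b - Pb)‖ ≤ h^3 * (R^3 * E) * ((K*E)*(K*E)) := by
    refine (norm_mul_le _ _).trans ?_
    have h2 : ‖Pb * Pa‖ ≤ (K*E)*(K*E) := by
      refine (norm_mul_le _ _).trans ?_
      exact mul_le_mul hPbn hPan (norm_nonneg _) hKE0
    calc ‖Pb * Pa‖ * ‖exp b - Pb‖
        ≤ ((K*E)*(K*E)) * ((h*R)^3 * E) :=
          mul_le_mul h2 hDb (norm_nonneg _) (by positivity)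
      _ = h^3 * (R^3 * E) * ((K*E)*(K*E)) := by ring
  have T5 : ‖Pc - exp c‖ ≤ h^3 * (R^3 * E) := by rw [← hcube]; exact hDc
  have htri : ‖(exp b - Pb) * (exp a * exp b)
        + Pb * ((exp a - Pa) * exp b)
        + (Pb * Pa) * (exp b - Pb)
        + (Pb * Pa * Pb - Pc)
        + (Pc - exp c)‖
      ≤ ‖(exp b - Pb) * (exp a * exp b)‖
        + ‖Pb * ((exp a - Pa) * exp b)‖
        + ‖(Pb * Pa) * (exp b - Pb)‖
        + ‖Pb * Pa * Pb - Pc‖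
        + ‖Pc - exp c‖ := by
    refine (norm_add_le _ _).trans ?_
    have t1 := norm_add_le ((exp b - Pb) * (exp a * exp b)
        + Pb * ((exp a - Pa) * exp b) + (Pb * Pa) * (exp b - Pb)) (Pb * Pa * Pb - Pc)
    have t2 := norm_add_le ((exp b - Pb) * (exp a * exp b)
        + Pb * ((exp a - Pa) * exp b)) ((Pb * Pa) * (exp b - Pb))
    have t3 := norm_add_le ((exp b - Pb) * (exp a * exp b))
        (Pb * ((exp a - Pa) * exp b))
    linarith
  refine htri.trans ?_
  have h3pos : (0:ℝ) < h^3 := by positivity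
  calc ‖(exp b - Pb) * (exp a * exp b)‖
        + ‖Pb * ((exp a - Pa) * exp b)‖
        + ‖(Pb * Pa) * (exp b - Pb)‖
        + ‖Pb * Pa * Pb - Pc‖
        + ‖Pc - exp c‖
      ≤ h^3 * (R^3 * E) * ((K*E)*(K*E)) + h^3 * (R^3 * E) * ((K*E)*(K*E))
        + h^3 * (R^3 * E) * ((K*E)*(K*E)) + h^3 * CM + h^3 * (R^3 * E) := by
        linarith [hpolybound]
    _ = (3 * (R^3 * E) * ((K*E) * (K*E)) + R^3 * E + CM) * h^3 := by ring
    _ ≤ (3 * (R^3 * E) * ((K*E) * (K*E)) + R^3 * E + CM + 1) * h^3 := by nlinarith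
end

section
/- Let A and B be elements of a Banach algebra. Then the 5-stage composition Δ₅(h) = exp((h/6)B)·exp((h/2)A)·exp((2h/3)B)·exp((h/2)A)·exp((h/6)B) is a second-order approximation of the exact exponential: ‖Δ₅(h) − exp(h(A+B))‖ = O(h³) as h → 0. -/
open NormedSpace

section aux

variable {𝒜 : Type*} [NormedRing 𝒜] [NormedAlgebra ℝ 𝒜] [CompleteSpace 𝒜]

/-- auxiliary: `exp((c t) • X)` -/
noncomputable def eu (c : ℝ) (X : 𝒜) : ℝ → 𝒜 := fun t => exp ((c * t) • X)

noncomputable def eu' (c : ℝ) (X : 𝒜) : ℝ → 𝒜 := fun t => c • (X * eu c X t)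

noncomputable def eu'' (c : ℝ) (X : 𝒜) : ℝ → 𝒜 := fun t => c • (X * eu' c X t)

lemma hasDerivAt_eu (c : ℝ) (X : 𝒜) (t : ℝ) : HasDerivAt (eu c X) (eu' c X t) t := by
  have h1 : HasDerivAt (fun s : ℝ => c * s) c t := by
    simpa using (hasDerivAt_id t).const_mul c
  have h2 := (hasDerivAt_exp_smul_const' (𝕂 := ℝ) X (c * t)).scomp t h1
  simp [eu, eu', Function.comp_def, smul_mul_assoc, mul_smul_comm] at h2; exact h2

lemma hasDerivAt_eu' (c : ℝ) (X : 𝒜) (t : ℝ) : HasDerivAt (eu' c X) (eu'' c X t) t :=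
  ((hasDerivAt_eu c X t).const_mul X).const_smul c

lemma analyticAt_eu (c : ℝ) (X : 𝒜) (t : ℝ) : AnalyticAt ℝ (eu c X) t := by
  have h1 : AnalyticAt ℝ (fun s : ℝ => (c * s) • X) t :=
    (analyticAt_const.mul analyticAt_id).smul analyticAt_const
  have h2 : AnalyticAt ℝ exp ((c * t) • X) :=
    analyticAt_exp_of_mem_ball (𝕂 := ℝ) _ (by simp [expSeries_radius_eq_top])
  exact AnalyticAt.comp (g := exp) (f := fun s : ℝ => (c * s) • X) (x := t) h2 h1

lemma eu_zero (c : ℝ) (X : 𝒜) : eu c X 0 = 1 := by simp [eu]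

lemma eu'_zero (c : ℝ) (X : 𝒜) : eu' c X 0 = c • X := by simp [eu', eu]

lemma eu''_zero (c : ℝ) (X : 𝒜) : eu'' c X 0 = (c * c) • (X * X) := by
  simp [eu'', eu'_zero, mul_smul_comm, smul_smul]

noncomputable def Gfun (A B : 𝒜) : ℝ → 𝒜 := fun t =>
  ((((eu (1/6) B t) * eu (1/2) A t) * eu (2/3) B t) * eu (1/2) A t) * eu (1/6) B t

noncomputable def Gfun' (A B : 𝒜) : ℝ → 𝒜 := fun t =>
  ((((eu' (1/6) B t) * eu (1/2) A t + (eu (1/6) B t) * eu' (1/2) A t) * eu (2/3) B t + ((eu (1/6) B t) * eu (1/2) A t) * eu' (2/3) B t) * eu (1/2) A t + (((eu (1/6) B t) * eu (1/2) A t) * eu (2/3) B t) * eu' (1/2) A t) * eu (1/6) B t + ((((eu (1/6) B t) * eu (1/2) A t) * eu (2/3) B t) * eu (1/2) A t) * eu' (1/6) B t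

noncomputable def Gfun'' (A B : 𝒜) : ℝ → 𝒜 := fun t =>
  ((((((((eu'' (1/6) B t) * eu (1/2) A t + (eu' (1/6) B t) * eu' (1/2) A t) + ((eu' (1/6) B t) * eu' (1/2) A t + (eu (1/6) B t) * eu'' (1/2) A t)) * eu (2/3) B t + ((eu' (1/6) B t) * eu (1/2) A t + (eu (1/6) B t) * eu' (1/2) A t) * eu' (2/3) B t) + (((eu' (1/6) B t) * eu (1/2) A t + (eu (1/6) B t) * eu' (1/2) A t) * eu' (2/3) B t + ((eu (1/6) B t) * eu (1/2) A t) * eu'' (2/3) B t)) * eu (1/2) A t + (((eu' (1/6) B t) * eu (1/2) A t + (eu (1/6) B t) * eu' (1/2) A t) * eu (2/3) B t + ((eu (1/6) B t) * eu (1/2) A t) * eu' (2/3) B t) * eu' (1/2) A t) + ((((eu' (1/6) B t) * eu (1/2) A t + (eu (1/6) B t) * eu' (1/2) A t) * eu (2/3) B t + ((eu (1/6) B t) * eu (1/2) A t) * eu' (2/3) B t) * eu' (1/2) A t + (((eu (1/6) B t) * eu (1/2) A t) * eu (2/3) B t) * eu'' (1/2) A t)) * eu (1/6) B t + ((((eu'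 (1/6) B t) * eu (1/2) A t + (eu (1/6) B t) * eu' (1/2) A t) * eu (2/3) B t + ((eu (1/6) B t) * eu (1/2) A t) * eu' (2/3) B t) * eu (1/2) A t + (((eu (1/6) B t) * eu (1/2) A t) * eu (2/3) B t) * eu' (1/2) A t) * eu' (1/6) B t) + (((((eu' (1/6) B t) * eu (1/2) A t + (eu (1/6) B t) * eu' (1/2) A t) * eu (2/3) B t + ((eu (1/6) B t) * eu (1/2) A t) * eu' (2/3) B t) * eu (1/2) A t + (((eu (1/6) B t) * eu (1/2) A t) * eu (2/3) B t) * eu' (1/2) A t) * eu' (1/6) B t + ((((eu (1/6) B t) * eu (1/2) A t) * eu (2/3) B t) * eu (1/2) A t) * eu'' (1/6) B t)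

lemma hasDerivAt_Gfun (A B : 𝒜) (t : ℝ) : HasDerivAt (Gfun A B) (Gfun' A B t) t :=
  (((((hasDerivAt_eu (1/6) B t).mul (hasDerivAt_eu (1/2) A t)).mul
      (hasDerivAt_eu (2/3) B t)).mul (hasDerivAt_eu (1/2) A t)).mul
      (hasDerivAt_eu (1/6) B t))

lemma hasDerivAt_Gfun' (A B : 𝒜) (t : ℝ) : HasDerivAt (Gfun' A B) (Gfun'' A B t) t := by
  have h1 := hasDerivAt_eu (1/6) B t
  have h2 := hasDerivAt_eu (1/2) A t
  have h3 := hasDerivAt_eu (2/3) B t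
  have h4 := hasDerivAt_eu (1/2) A t
  have h5 := hasDerivAt_eu (1/6) B t
  have e1 := hasDerivAt_eu' (1/6) B t
  have e2 := hasDerivAt_eu' (1/2) A t
  have e3 := hasDerivAt_eu' (2/3) B t
  have e4 := hasDerivAt_eu' (1/2) A t
  have e5 := hasDerivAt_eu' (1/6) B t
  have hP2 := h1.mul h2
  have hP3 := hP2.mul h3
  have hP4 := hP3.mul h4
  have hD2 := (e1.mul h2).add (h1.mul e2)
  have hD3 := (hD2.mul h3).add (hP2.mul e3)
  have hD4 := (hD3.mul h4).add (hP3.mul e4)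
  exact (hD4.mul h5).add (hP4.mul e5)

lemma analyticAt_Gfun (A B : 𝒜) (t : ℝ) : AnalyticAt ℝ (Gfun A B) t :=
  ((((analyticAt_eu (1/6) B t).mul (analyticAt_eu (1/2) A t)).mul
      (analyticAt_eu (2/3) B t)).mul (analyticAt_eu (1/2) A t)).mul
      (analyticAt_eu (1/6) B t)

lemma Gfun_zero (A B : 𝒜) : Gfun A B 0 = 1 := by simp [Gfun, eu_zero]

lemma Gfun'_zero (A B : 𝒜) : Gfun' A B 0 = A + B := by
  simp only [Gfun', eu_zero, eu'_zero, mul_one, one_mul]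
  module

lemma Gfun''_zero (A B : 𝒜) : Gfun'' A B 0 = (A + B) * (A + B) := by
  simp only [Gfun'', eu_zero, eu'_zero, eu''_zero, mul_one, one_mul, add_mul, mul_add,
    smul_mul_assoc, mul_smul_comm, smul_smul, smul_add]
  module

end aux

/-- The 5-stage composition
`Δ₅(h) = exp((h/6)B)·exp((h/2)A)·exp((2h/3)B)·exp((h/2)A)·exp((h/6)B)` is a second-order
approximation of `exp(h(A+B))`: the error is `O(h³)` as `h → 0`. -/
theorem five_stage_second_order {𝒜 : Type*} [NormedRing 𝒜] [NormedAlgebra ℝ 𝒜]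
    [CompleteSpace 𝒜] (A B : 𝒜) :
    ∃ C > (0 : ℝ), ∃ δ > (0 : ℝ), ∀ h : ℝ, 0 < h → h < δ →
      ‖exp ((h / 6) • B) * exp ((h / 2) • A) * exp ((2 * h / 3) • B) *
            exp ((h / 2) • A) * exp ((h / 6) • B)
          - exp (h • (A + B))‖ ≤ C * h ^ 3 := by
  have hF : ∀ t : ℝ, HasDerivAt (fun s : ℝ => Gfun A B s - exp (s • (A + B)))
      (Gfun' A B t - exp (t • (A + B)) * (A + B)) t :=
    fun t => (hasDerivAt_Gfun A B t).sub (hasDerivAt_exp_smul_const (A + B) t)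
  have hderivF : deriv (fun s : ℝ => Gfun A B s - exp (s • (A + B)))
      = fun t => Gfun' A B t - exp (t • (A + B)) * (A + B) :=
    funext fun t => (hF t).deriv
  have hF' : ∀ t : ℝ, HasDerivAt (fun s : ℝ => Gfun' A B s - exp (s • (A + B)) * (A + B))
      (Gfun'' A B t - exp (t • (A + B)) * (A + B) * (A + B)) t :=
    fun t => (hasDerivAt_Gfun' A B t).sub ((hasDerivAt_exp_smul_const (A + B) t).mul_const (A + B))
  set f : ℝ → 𝒜 := fun s => Gfun A B s - exp (s • (A + B)) with hfdef
  have hAn : AnalyticAt ℝ f 0 := by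
    refine (analyticAt_Gfun A B 0).sub ?_
    have h1 : AnalyticAt ℝ (fun s : ℝ => s • (A + B)) 0 := analyticAt_id.smul analyticAt_const
    have h2 : AnalyticAt ℝ exp ((0 : ℝ) • (A + B)) :=
      analyticAt_exp_of_mem_ball (𝕂 := ℝ) _ (by simp [expSeries_radius_eq_top])
    exact AnalyticAt.comp (g := exp) (f := fun s : ℝ => s • (A + B)) (x := (0:ℝ)) h2 h1
  -- iterated derivatives of f at 0 vanish up to order 2
  have hd0 : f 0 = 0 := by simp [hfdef, Gfun_zero]
  have hd1 : deriv f 0 = 0 := by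
    rw [hderivF]
    simp [Gfun'_zero]
  have hd2 : deriv (deriv f) 0 = 0 := by
    rw [hderivF]
    rw [(hF' 0).deriv]
    simp [Gfun''_zero]
  have hiter : ∀ k, k < 3 → iteratedDeriv k f 0 = 0 := by
    intro k hk
    interval_cases k
    · simpa [iteratedDeriv_zero] using hd0
    · simpa [iteratedDeriv_one] using hd1
    · rw [show (2 : ℕ) = 1 + 1 from rfl, iteratedDeriv_succ, iteratedDeriv_one]
      exact hd2
  obtain ⟨p, hp⟩ := hAn
  have hO := hp.isBigO_sub_partialSum_pow 3
  obtain ⟨r, hpr⟩ := hp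
  have hcoef : ∀ k, k < 3 → ∀ y : ℝ, (p k fun _ => y) = 0 := by
    intro k hk y
    have h1 := hpr.factorial_smul y k
    rw [iteratedFDeriv_apply_eq_iteratedDeriv_mul_prod, hiter k hk, smul_zero] at h1
    have h2 : ((Nat.factorial k : ℝ)) • (p k fun _ => y) = 0 := by
      rw [Nat.cast_smul_eq_nsmul]; exact h1
    have h3 : (Nat.factorial k : ℝ) ≠ 0 := by positivity
    simpa [h3] using (smul_eq_zero.mp h2)
  have hps : ∀ y : ℝ, p.partialSum 3 y = 0 := by
    have c0 : p.coeff 0 = 0 := by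
      exact hcoef 0 (by norm_num) 1
    have c1 : p.coeff 1 = 0 := by
      exact hcoef 1 (by norm_num) 1
    have c2 : p.coeff 2 = 0 := by
      exact hcoef 2 (by norm_num) 1
    intro y
    simp [FormalMultilinearSeries.partialSum, Finset.sum_range_succ, c0, c1, c2]
  rw [Asymptotics.isBigO_iff] at hO
  obtain ⟨C, hC⟩ := hO
  rw [Metric.eventually_nhds_iff] at hC
  obtain ⟨δ, hδpos, hδ⟩ := hC
  refine ⟨max C 1, lt_max_of_lt_right one_pos, δ, hδpos, fun h h0 hδ' => ?_⟩
  have hmem : dist h (0 : ℝ) < δ := by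
    rw [Real.dist_eq, sub_zero, abs_of_pos h0]; exact hδ'
  have := hδ hmem
  rw [zero_add, hps h] at this
  have hnorm : ‖f h‖ ≤ C * h ^ 3 := by
    simpa [Real.norm_eq_abs, abs_pow, abs_abs, abs_of_pos h0] using this
  have hfh : f h = exp ((h / 6) • B) * exp ((h / 2) • A) * exp ((2 * h / 3) • B) *
      exp ((h / 2) • A) * exp ((h / 6) • B) - exp (h • (A + B)) := by
    have e1 : (1 / 6 : ℝ) * h = h / 6 := by ring
    have e2 : (1 / 2 : ℝ) * h = h / 2 := by ring
    have e3 : (2 / 3 : ℝ) * h = 2 * h / 3 := by ring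
    simp only [hfdef, Gfun, eu, e1, e2, e3]
  rw [← hfh]
  calc ‖f h‖ ≤ C * h ^ 3 := hnorm
    _ ≤ max C 1 * h ^ 3 := by
        have : (0:ℝ) ≤ h ^ 3 := by positivity
        exact mul_le_mul_of_nonneg_right (le_max_left C 1) this
end

section
/- Let A and B be elements of a Banach algebra and fix h ∈ ℝ. Then the M-fold nested leap-frog product converges to the exact exponential with second-order rate in 1/M: there exists a constant C (depending on A, B and h) such that for every positive integer M, ‖( exp((h/(2M))B)·exp((h/M)A)·exp((h/(2M))B) )^M − exp(h(A+B))‖ ≤ C/M². -/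
open NormedSpace

section Aux
open Nat

variable {𝒜 : Type*} [NormedRing 𝒜] [NormedAlgebra ℝ 𝒜] [CompleteSpace 𝒜]

private lemma exp_tail' (x : 𝒜) (N : ℕ) (hN : 1 ≤ N) :
    ‖exp x - ∑ k ∈ Finset.range N, ((k ! : ℝ))⁻¹ • x ^ k‖ ≤ ‖x‖ ^ N * Real.exp ‖x‖ := by
  have hs : Summable (fun n : ℕ => ((n ! : ℝ))⁻¹ • x ^ n) := expSeries_summable' x
  have h1 : exp x - ∑ k ∈ Finset.range N, ((k ! : ℝ))⁻¹ • x ^ k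
      = ∑' n : ℕ, (((n + N)! : ℝ))⁻¹ • x ^ (n + N) := by
    simp only [exp_eq_tsum ℝ]
    rw [← Summable.sum_add_tsum_nat_add N hs]
    abel
  rw [h1]
  have hsr : Summable (fun n : ℕ => ‖x‖ ^ n / n !) := Real.summable_pow_div_factorial ‖x‖
  have hbound : ∀ n : ℕ, ‖(((n + N)! : ℝ))⁻¹ • x ^ (n + N)‖ ≤ ‖x‖ ^ N * (‖x‖ ^ n / n !) := by
    intro n
    rw [norm_smul, Real.norm_eq_abs, abs_inv, abs_of_nonneg (by positivity)]
    calc ((n + N)! : ℝ)⁻¹ * ‖x ^ (n + N)‖ ≤ ((n + N)! : ℝ)⁻¹ * ‖x‖ ^ (n + N) :=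
          mul_le_mul_of_nonneg_left (norm_pow_le' x (by omega)) (by positivity)
      _ ≤ (n ! : ℝ)⁻¹ * ‖x‖ ^ (n + N) := by
          have : (n ! : ℝ) ≤ ((n+N)! : ℝ) := by exact_mod_cast Nat.factorial_le (by omega)
          gcongr
      _ = ‖x‖ ^ N * (‖x‖ ^ n / n !) := by rw [pow_add]; ring
  calc ‖∑' n : ℕ, (((n + N)! : ℝ))⁻¹ • x ^ (n + N)‖
      ≤ ∑' n : ℕ, (‖x‖ ^ N * (‖x‖ ^ n / n !)) :=
        tsum_of_norm_bounded (hsr.mul_left _).hasSum hbound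
    _ = ‖x‖ ^ N * Real.exp ‖x‖ := by
        rw [tsum_mul_left, Real.exp_eq_exp_ℝ, exp_eq_tsum_div]

private lemma exp_sub_one_norm (x : 𝒜) : ‖exp x - 1‖ ≤ ‖x‖ * Real.exp ‖x‖ := by
  have := exp_tail' x 1 le_rfl
  simpa using this

private lemma exp_sub_quad_norm (x : 𝒜) :
    ‖exp x - (1 + x + (2⁻¹:ℝ) • (x*x))‖ ≤ ‖x‖ ^ 3 * Real.exp ‖x‖ := by
  have h := exp_tail' x 3 (by norm_num)
  have h2 : ∑ k ∈ Finset.range 3, ((k ! : ℝ))⁻¹ • x ^ k = 1 + x + (2⁻¹:ℝ) • (x*x) := by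
    norm_num [Finset.sum_range_succ, pow_succ]
  rwa [h2] at h

private lemma poly_id' (u v : 𝒜) :
    (1 + u + (2⁻¹:ℝ) • (u*u)) * (1 + v + (2⁻¹:ℝ) • (v*v)) * (1 + u + (2⁻¹:ℝ) • (u*u))
      - (1 + (u + v + u) + (2⁻¹:ℝ) • ((u+v+u)*(u+v+u)))
    = (u*v*u + u*u*u)
      + (2⁻¹:ℝ) • (u*v*v + v*v*u + u*u*v + v*u*u)
      + (2⁻¹:ℝ) • (u*v*v*u + u*u*v*u + u*v*u*u)
      + (4⁻¹:ℝ) • (u*u*v*v + v*v*u*u + u*u*u*u + u*u*v*v*u + u*v*v*u*u + u*u*v*u*u)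
      + (8⁻¹:ℝ) • (u*u*v*v*u*u) := by
  simp only [mul_add, add_mul, mul_one, one_mul, smul_mul_assoc, mul_smul_comm, smul_smul,
    smul_add, mul_assoc]
  module

omit [NormedAlgebra ℝ 𝒜] [CompleteSpace 𝒜] in
private lemma pow_sub_pow_eq' (p e : 𝒜) : ∀ n : ℕ,
    p ^ n - e ^ n = ∑ k ∈ Finset.range n, p ^ k * (p - e) * e ^ (n - 1 - k) := by
  intro n
  induction n with
  | zero => simp
  | succ n ih =>
    rw [Finset.sum_range_succ]
    have hstep : ∀ k ∈ Finset.range n,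
        p ^ k * (p - e) * e ^ (n + 1 - 1 - k) = (p ^ k * (p - e) * e ^ (n - 1 - k)) * e := by
      intro k hk
      rw [Finset.mem_range] at hk
      have : n + 1 - 1 - k = (n - 1 - k) + 1 := by omega
      rw [this, pow_succ, ← mul_assoc]
    rw [Finset.sum_congr rfl hstep, ← Finset.sum_mul, ← ih]
    have : n + 1 - 1 - n = 0 := by omega
    rw [this, pow_zero, mul_one, pow_succ, pow_succ]
    noncomm_ring

omit [NormedAlgebra ℝ 𝒜] [CompleteSpace 𝒜] in
private lemma nmul {x y : 𝒜} {p q : ℝ} (hx : ‖x‖ ≤ p) (hy : ‖y‖ ≤ q) (hp : 0 ≤ p) :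
    ‖x * y‖ ≤ p * q :=
  (norm_mul_le x y).trans (mul_le_mul hx hy (norm_nonneg y) hp)

end Aux

set_option maxHeartbeats 2000000 in
/-- For fixed `h`, the `M`-fold nested leap-frog product converges to `exp(h(A+B))` with
second-order rate in `1/M`. -/
theorem nested_leapfrog_rate {𝒜 : Type*} [NormedRing 𝒜] [NormedAlgebra ℝ 𝒜]
    [CompleteSpace 𝒜] (A B : 𝒜) (h : ℝ) :
    ∃ C : ℝ, ∀ M : ℕ, 0 < M →
      ‖(exp ((h / (2 * (M : ℝ))) • B) * exp ((h / (M : ℝ)) • A) *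
            exp ((h / (2 * (M : ℝ))) • B)) ^ M
          - exp (h • (A + B))‖ ≤ C / (M : ℝ) ^ 2 := by
  set a : ℝ := ‖A‖ with ha
  set b : ℝ := ‖B‖ with hb
  set L : ℝ := ‖(1 : 𝒜)‖ with hL
  set s : ℝ := |h| * (a + b) with hs
  have hs0 : 0 ≤ s := by positivity
  set F : ℝ := L + s * Real.exp s + 1 with hF
  have hF1 : (1:ℝ) ≤ F := by
    have h1 : 0 ≤ L := norm_nonneg _
    have h2 : 0 ≤ s * Real.exp s := mul_nonneg hs0 (Real.exp_nonneg s)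
    linarith
  have hF0 : (0:ℝ) ≤ F := by linarith
  set K₁ : ℝ := 3 * F^2 * Real.exp s + Real.exp s + 16 * (1+s)^3 with hK₁
  have hK₁0 : 0 ≤ K₁ := by positivity
  refine ⟨F^2 * (s^3 * K₁) * Real.exp (F * (s^3 * K₁)), ?_⟩
  intro M hM
  have hM0 : (0:ℝ) < (M:ℝ) := by exact_mod_cast hM
  have hM1 : (1:ℝ) ≤ (M:ℝ) := by exact_mod_cast hM
  set u : 𝒜 := (h / (2 * (M : ℝ))) • B with hu_def
  set v : 𝒜 := (h / (M : ℝ)) • A with hv_def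
  set w : 𝒜 := (h / (M : ℝ)) • (A + B) with hw_def
  set m : ℝ := s / M with hm
  have hm0 : 0 ≤ m := by positivity
  have hms : m ≤ s := by
    rw [hm]; exact div_le_self hs0 hM1
  -- norms of u, v, w
  have hnu : ‖u‖ ≤ m := by
    rw [hu_def, norm_smul, Real.norm_eq_abs, abs_div, abs_of_pos (by positivity : (0:ℝ) < 2 * M),
      hm, hs]
    rw [div_mul_eq_mul_div, div_le_div_iff₀ (by positivity) hM0, ← hb]
    have hb0 : (0:ℝ) ≤ b := hb ▸ norm_nonneg B
    have ha0 : (0:ℝ) ≤ a := ha ▸ norm_nonneg A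
    have h0 : (0:ℝ) ≤ |h| := abs_nonneg h
    nlinarith [mul_nonneg (mul_nonneg h0 ha0) hM0.le, mul_nonneg (mul_nonneg h0 hb0) hM0.le]
  have hnv : ‖v‖ ≤ m := by
    rw [hv_def, norm_smul, Real.norm_eq_abs, abs_div, abs_of_pos hM0, hm, hs]
    rw [div_mul_eq_mul_div, div_le_div_iff₀ hM0 hM0, ← ha]
    have ha0 : (0:ℝ) ≤ a := ha ▸ norm_nonneg A
    have hb0 : (0:ℝ) ≤ b := hb ▸ norm_nonneg B
    have h0 : (0:ℝ) ≤ |h| := abs_nonneg h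
    nlinarith [mul_nonneg (mul_nonneg h0 hb0) hM0.le]
  have hnw : ‖w‖ ≤ m := by
    rw [hw_def, norm_smul, Real.norm_eq_abs, abs_div, abs_of_pos hM0, hm, hs]
    rw [div_mul_eq_mul_div, div_le_div_iff₀ hM0 hM0]
    have hab : ‖A + B‖ ≤ a + b := ha ▸ hb ▸ norm_add_le A B
    have h0 : (0:ℝ) ≤ |h| := abs_nonneg h
    gcongr
  -- generic exp bounds
  have hexp_norm : ∀ x : 𝒜, ‖x‖ ≤ s → ‖exp x‖ ≤ F := by
    intro x hx
    have h1 := exp_sub_one_norm x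
    have h2 : ‖x‖ * Real.exp ‖x‖ ≤ s * Real.exp s :=
      mul_le_mul hx (Real.exp_le_exp.2 hx) (Real.exp_nonneg _) hs0
    calc ‖exp x‖ ≤ ‖exp x - 1‖ + ‖(1:𝒜)‖ := by
          simpa using norm_add_le (exp x - 1) 1
      _ ≤ s * Real.exp s + L := by rw [hL]; linarith
      _ ≤ F := by rw [hF]; linarith
  have hq_norm : ∀ x : 𝒜, ‖x‖ ≤ s → ‖1 + x + (2⁻¹:ℝ) • (x*x)‖ ≤ F := by
    intro x hx
    have hxx : ‖(2⁻¹:ℝ) • (x*x)‖ ≤ 2⁻¹ * (s * s) := by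
      rw [norm_smul, Real.norm_eq_abs]
      have := nmul hx hx hs0
      rw [abs_of_pos (by norm_num : (0:ℝ) < 2⁻¹)]
      nlinarith [norm_nonneg (x*x)]
    have hes : 1 + s/2 ≤ Real.exp s := by
      have := Real.add_one_le_exp s
      linarith
    calc ‖1 + x + (2⁻¹:ℝ) • (x*x)‖ ≤ ‖(1:𝒜)‖ + ‖x‖ + ‖(2⁻¹:ℝ) • (x*x)‖ :=
          (norm_add_le _ _).trans (by gcongr; exact norm_add_le _ _)
      _ ≤ L + s + 2⁻¹ * (s*s) := by rw [hL]; gcongr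
      _ ≤ L + s * Real.exp s + 1 := by nlinarith
      _ = F := hF.symm
  have hquad : ∀ x : 𝒜, ‖x‖ ≤ m → ‖exp x - (1 + x + (2⁻¹:ℝ) • (x*x))‖ ≤ m^3 * Real.exp s := by
    intro x hx
    refine (exp_sub_quad_norm x).trans ?_
    have hxs : ‖x‖ ≤ s := hx.trans hms
    exact mul_le_mul (pow_le_pow_left₀ (norm_nonneg x) hx 3)
      (Real.exp_le_exp.2 hxs) (Real.exp_nonneg _) (by positivity)
  -- quadratic approximations
  set qu : 𝒜 := 1 + u + (2⁻¹:ℝ) • (u*u) with hqu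
  set qv : 𝒜 := 1 + v + (2⁻¹:ℝ) • (v*v) with hqv
  set qw : 𝒜 := 1 + w + (2⁻¹:ℝ) • (w*w) with hqw
  set p : 𝒜 := exp u * exp v * exp u with hp
  set e : 𝒜 := exp w with he
  have hus : ‖u‖ ≤ s := hnu.trans hms
  have hvs : ‖v‖ ≤ s := hnv.trans hms
  have hws : ‖w‖ ≤ s := hnw.trans hms
  -- step 1 : ‖p - qu qv qu‖
  have hstep1 : ‖p - qu * qv * qu‖ ≤ 3 * F^2 * (m^3 * Real.exp s) := by
    have hid : p - qu * qv * qu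
        = (exp u - qu) * (exp v * exp u) + qu * ((exp v - qv) * exp u)
          + (qu * qv) * (exp u - qu) := by
      rw [hp]; noncomm_ring
    rw [hid]
    have t1 : ‖(exp u - qu) * (exp v * exp u)‖ ≤ (m^3 * Real.exp s) * (F * F) :=
      nmul (hquad u hnu) (nmul (hexp_norm v hvs) (hexp_norm u hus) hF0) (by positivity)
    have t2 : ‖qu * ((exp v - qv) * exp u)‖ ≤ F * ((m^3 * Real.exp s) * F) :=
      nmul (hq_norm u hus) (nmul (hquad v hnv) (hexp_norm u hus) (by positivity)) hF0
    have t3 : ‖(qu * qv) * (exp u - qu)‖ ≤ (F * F) * (m^3 * Real.exp s) :=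
      nmul (nmul (hq_norm u hus) (hq_norm v hvs) hF0) (hquad u hnu) (by positivity)
    calc ‖_ + _ + _‖ ≤ ‖(exp u - qu) * (exp v * exp u)‖
          + ‖qu * ((exp v - qv) * exp u)‖ + ‖(qu * qv) * (exp u - qu)‖ :=
          (norm_add_le _ _).trans (by gcongr; exact norm_add_le _ _)
      _ ≤ 3 * F^2 * (m^3 * Real.exp s) := by nlinarith
  -- step 2 : ‖qu qv qu - qw‖
  have hw_sum : u + v + u = w := by
    rw [hu_def, hv_def, hw_def, smul_add]
    have : h / (2 * (M:ℝ)) + h / (2 * (M:ℝ)) = h / M := by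
      field_simp; ring
    module
  have hstep2 : ‖qu * qv * qu - qw‖ ≤ 16 * (m^3 * (1+s)^3) := by
    have hid := poly_id' u v
    rw [hw_sum] at hid
    rw [hqu, hqv, hqw, hid]
    -- monomial bounds
    have d3 : ∀ x y z : 𝒜, ‖x‖ ≤ m → ‖y‖ ≤ m → ‖z‖ ≤ m → ‖x*y*z‖ ≤ m^3 := by
      intro x y z hx hy hz
      calc ‖x*y*z‖ ≤ (m*m)*m := nmul (nmul hx hy hm0) hz (by positivity)
        _ = m^3 := by ring
    have d4 : ∀ x y z t : 𝒜, ‖x‖ ≤ m → ‖y‖ ≤ m → ‖z‖ ≤ m → ‖t‖ ≤ m → ‖x*y*z*t‖ ≤ m^4 := by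
      intro x y z t hx hy hz ht
      calc ‖x*y*z*t‖ ≤ m^3*m := nmul (d3 x y z hx hy hz) ht (by positivity)
        _ = m^4 := by ring
    have d5 : ∀ x y z t r : 𝒜, ‖x‖ ≤ m → ‖y‖ ≤ m → ‖z‖ ≤ m → ‖t‖ ≤ m → ‖r‖ ≤ m →
        ‖x*y*z*t*r‖ ≤ m^5 := by
      intro x y z t r hx hy hz ht hr
      calc ‖x*y*z*t*r‖ ≤ m^4*m := nmul (d4 x y z t hx hy hz ht) hr (by positivity)
        _ = m^5 := by ring
    have d6 : ‖u*u*v*v*u*u‖ ≤ m^6 := by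
      calc ‖u*u*v*v*u*u‖ ≤ m^5*m := nmul (d5 u u v v u hnu hnu hnv hnv hnu) hnu (by positivity)
        _ = m^6 := by ring
    have l1 : ‖u*v*u + u*u*u‖ ≤ 2 * m^3 := by
      have := norm_add_le (u*v*u) (u*u*u)
      have h1 := d3 u v u hnu hnv hnu
      have h2 := d3 u u u hnu hnu hnu
      linarith
    have l2 : ‖(2⁻¹:ℝ) • (u*v*v + v*v*u + u*u*v + v*u*u)‖ ≤ 2 * m^3 := by
      rw [norm_smul, Real.norm_eq_abs, abs_of_pos (by norm_num : (0:ℝ) < 2⁻¹)]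
      have h1 := d3 u v v hnu hnv hnv
      have h2 := d3 v v u hnv hnv hnu
      have h3 := d3 u u v hnu hnu hnv
      have h4 := d3 v u u hnv hnu hnu
      have hsum : ‖u*v*v + v*v*u + u*u*v + v*u*u‖ ≤ 4 * m^3 := by
        calc ‖u*v*v + v*v*u + u*u*v + v*u*u‖
            ≤ ‖u*v*v + v*v*u + u*u*v‖ + ‖v*u*u‖ := norm_add_le _ _
          _ ≤ (‖u*v*v + v*v*u‖ + ‖u*u*v‖) + ‖v*u*u‖ := by gcongr; exact norm_add_le _ _
          _ ≤ ((‖u*v*v‖ + ‖v*v*u‖) + ‖u*u*v‖) + ‖v*u*u‖ := by gcongr; exact norm_add_le _ _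
          _ ≤ 4 * m^3 := by linarith
      nlinarith [norm_nonneg (u*v*v + v*v*u + u*u*v + v*u*u)]
    have l3 : ‖(2⁻¹:ℝ) • (u*v*v*u + u*u*v*u + u*v*u*u)‖ ≤ 2 * m^4 := by
      rw [norm_smul, Real.norm_eq_abs, abs_of_pos (by norm_num : (0:ℝ) < 2⁻¹)]
      have h1 := d4 u v v u hnu hnv hnv hnu
      have h2 := d4 u u v u hnu hnu hnv hnu
      have h3 := d4 u v u u hnu hnv hnu hnu
      have hsum : ‖u*v*v*u + u*u*v*u + u*v*u*u‖ ≤ 4 * m^4 := by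
        calc ‖u*v*v*u + u*u*v*u + u*v*u*u‖
            ≤ ‖u*v*v*u + u*u*v*u‖ + ‖u*v*u*u‖ := norm_add_le _ _
          _ ≤ (‖u*v*v*u‖ + ‖u*u*v*u‖) + ‖u*v*u*u‖ := by gcongr; exact norm_add_le _ _
          _ ≤ 4 * m^4 := by nlinarith [pow_nonneg hm0 4]
      nlinarith [norm_nonneg (u*v*v*u + u*u*v*u + u*v*u*u)]
    have l4 : ‖(4⁻¹:ℝ) • (u*u*v*v + v*v*u*u + u*u*u*u + u*u*v*v*u + u*v*v*u*u + u*u*v*u*u)‖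
        ≤ m^4 + m^5 := by
      rw [norm_smul, Real.norm_eq_abs, abs_of_pos (by norm_num : (0:ℝ) < 4⁻¹)]
      have h1 := d4 u u v v hnu hnu hnv hnv
      have h2 := d4 v v u u hnv hnv hnu hnu
      have h3 := d4 u u u u hnu hnu hnu hnu
      have h4 := d5 u u v v u hnu hnu hnv hnv hnu
      have h5 := d5 u v v u u hnu hnv hnv hnu hnu
      have h6 := d5 u u v u u hnu hnu hnv hnu hnu
      have hsum : ‖u*u*v*v + v*v*u*u + u*u*u*u + u*u*v*v*u + u*v*v*u*u + u*u*v*u*u‖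
          ≤ 3 * m^4 + 3 * m^5 := by
        calc ‖_‖ ≤ ‖u*u*v*v + v*v*u*u + u*u*u*u + u*u*v*v*u + u*v*v*u*u‖ + ‖u*u*v*u*u‖ :=
              norm_add_le _ _
          _ ≤ (‖u*u*v*v + v*v*u*u + u*u*u*u + u*u*v*v*u‖ + ‖u*v*v*u*u‖) + ‖u*u*v*u*u‖ := by
              gcongr; exact norm_add_le _ _
          _ ≤ ((‖u*u*v*v + v*v*u*u + u*u*u*u‖ + ‖u*u*v*v*u‖) + ‖u*v*v*u*u‖) + ‖u*u*v*u*u‖ := by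
              gcongr; exact norm_add_le _ _
          _ ≤ (((‖u*u*v*v + v*v*u*u‖ + ‖u*u*u*u‖) + ‖u*u*v*v*u‖) + ‖u*v*v*u*u‖) + ‖u*u*v*u*u‖ := by
              gcongr; exact norm_add_le _ _
          _ ≤ ((((‖u*u*v*v‖ + ‖v*v*u*u‖) + ‖u*u*u*u‖) + ‖u*u*v*v*u‖) + ‖u*v*v*u*u‖) + ‖u*u*v*u*u‖ := by
              gcongr; exact norm_add_le _ _
          _ ≤ 3 * m^4 + 3 * m^5 := by linarith
      nlinarith [pow_nonneg hm0 4, pow_nonneg hm0 5,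
        norm_nonneg (u*u*v*v + v*v*u*u + u*u*u*u + u*u*v*v*u + u*v*v*u*u + u*u*v*u*u)]
    have l5 : ‖(8⁻¹:ℝ) • (u*u*v*v*u*u)‖ ≤ m^6 := by
      rw [norm_smul, Real.norm_eq_abs, abs_of_pos (by norm_num : (0:ℝ) < 8⁻¹)]
      nlinarith [norm_nonneg (u*u*v*v*u*u)]
    -- combine
    have htot : ‖(u*v*u + u*u*u)
        + (2⁻¹:ℝ) • (u*v*v + v*v*u + u*u*v + v*u*u)
        + (2⁻¹:ℝ) • (u*v*v*u + u*u*v*u + u*v*u*u)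
        + (4⁻¹:ℝ) • (u*u*v*v + v*v*u*u + u*u*u*u + u*u*v*v*u + u*v*v*u*u + u*u*v*u*u)
        + (8⁻¹:ℝ) • (u*u*v*v*u*u)‖
        ≤ 4 * m^3 + 3 * m^4 + m^5 + m^6 := by
      calc ‖_‖ ≤ ‖(u*v*u + u*u*u)
            + (2⁻¹:ℝ) • (u*v*v + v*v*u + u*u*v + v*u*u)
            + (2⁻¹:ℝ) • (u*v*v*u + u*u*v*u + u*v*u*u)
            + (4⁻¹:ℝ) • (u*u*v*v + v*v*u*u + u*u*u*u + u*u*v*v*u + u*v*v*u*u + u*u*v*u*u)‖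
            + ‖(8⁻¹:ℝ) • (u*u*v*v*u*u)‖ := norm_add_le _ _
        _ ≤ (‖(u*v*u + u*u*u)
            + (2⁻¹:ℝ) • (u*v*v + v*v*u + u*u*v + v*u*u)
            + (2⁻¹:ℝ) • (u*v*v*u + u*u*v*u + u*v*u*u)‖
            + ‖(4⁻¹:ℝ) • (u*u*v*v + v*v*u*u + u*u*u*u + u*u*v*v*u + u*v*v*u*u + u*u*v*u*u)‖)
            + ‖(8⁻¹:ℝ) • (u*u*v*v*u*u)‖ := by gcongr; exact norm_add_le _ _
        _ ≤ ((‖(u*v*u + u*u*u) + (2⁻¹:ℝ) • (u*v*v + v*v*u + u*u*v + v*u*u)‖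
            + ‖(2⁻¹:ℝ) • (u*v*v*u + u*u*v*u + u*v*u*u)‖)
            + ‖(4⁻¹:ℝ) • (u*u*v*v + v*v*u*u + u*u*u*u + u*u*v*v*u + u*v*v*u*u + u*u*v*u*u)‖)
            + ‖(8⁻¹:ℝ) • (u*u*v*v*u*u)‖ := by gcongr; exact norm_add_le _ _
        _ ≤ (((‖u*v*u + u*u*u‖ + ‖(2⁻¹:ℝ) • (u*v*v + v*v*u + u*u*v + v*u*u)‖)
            + ‖(2⁻¹:ℝ) • (u*v*v*u + u*u*v*u + u*v*u*u)‖)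
            + ‖(4⁻¹:ℝ) • (u*u*v*v + v*v*u*u + u*u*u*u + u*u*v*v*u + u*v*v*u*u + u*u*v*u*u)‖)
            + ‖(8⁻¹:ℝ) • (u*u*v*v*u*u)‖ := by gcongr; exact norm_add_le _ _
        _ ≤ 4 * m^3 + 3 * m^4 + m^5 + m^6 := by linarith
    refine htot.trans ?_
    have hm3 : (0:ℝ) ≤ m^3 := pow_nonneg hm0 3
    have hs1 : m ≤ 1 + s := by linarith
    have e4 : m^4 ≤ m^3 * (1+s) := by
      calc m^4 = m^3 * m := by ring
        _ ≤ m^3 * (1+s) := mul_le_mul_of_nonneg_left hs1 hm3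
    have e5 : m^5 ≤ m^3 * (1+s)^2 := by
      calc m^5 = m^3 * m^2 := by ring
        _ ≤ m^3 * (1+s)^2 := mul_le_mul_of_nonneg_left (pow_le_pow_left₀ hm0 hs1 2) hm3
    have e6 : m^6 ≤ m^3 * (1+s)^3 := by
      calc m^6 = m^3 * m^3 := by ring
        _ ≤ m^3 * (1+s)^3 := mul_le_mul_of_nonneg_left (pow_le_pow_left₀ hm0 hs1 3) hm3
    have e0 : m^3 ≤ m^3 * (1+s)^3 := by
      calc m^3 = m^3 * 1 := by ring
        _ ≤ m^3 * (1+s)^3 := mul_le_mul_of_nonneg_left (one_le_pow₀ (by linarith)) hm3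
    have e1 : m^3 * (1+s) ≤ m^3 * (1+s)^3 := by
      refine mul_le_mul_of_nonneg_left ?_ hm3
      calc (1+s) = (1+s)^1 := by ring
        _ ≤ (1+s)^3 := pow_le_pow_right₀ (by linarith) (by norm_num)
    have e2 : m^3 * (1+s)^2 ≤ m^3 * (1+s)^3 := by
      refine mul_le_mul_of_nonneg_left ?_ hm3
      exact pow_le_pow_right₀ (by linarith) (by norm_num)
    linarith
  -- step 3 : ‖qw - e‖
  have hstep3 : ‖qw - e‖ ≤ m^3 * Real.exp s := by
    rw [hqw, he, ← norm_neg]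
    simpa [neg_sub] using hquad w hnw
  -- total one-step error
  have hδ : ‖p - e‖ ≤ s^3 * K₁ / M^3 := by
    have tri : ‖p - e‖ ≤ ‖p - qu*qv*qu‖ + ‖qu*qv*qu - qw‖ + ‖qw - e‖ := by
      have : p - e = (p - qu*qv*qu) + (qu*qv*qu - qw) + (qw - e) := by abel
      rw [this]
      exact (norm_add_le _ _).trans (by gcongr; exact norm_add_le _ _)
    have hm3 : m^3 = s^3 / M^3 := by rw [hm]; ring
    calc ‖p - e‖ ≤ 3 * F^2 * (m^3 * Real.exp s) + 16 * (m^3 * (1+s)^3) + m^3 * Real.exp s := by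
          linarith
      _ = m^3 * K₁ := by rw [hK₁]; ring
      _ = s^3 * K₁ / M^3 := by rw [hm3]; ring
  set δ : ℝ := ‖p - e‖ with hδdef
  have hδ0 : 0 ≤ δ := norm_nonneg _
  -- powers of e are uniformly bounded
  have hEk : ∀ k : ℕ, k ≤ M → ‖e ^ k‖ ≤ F := by
    intro k hk
    letI : NormedAlgebra ℚ 𝒜 := NormedAlgebra.restrictScalars ℚ ℝ 𝒜
    rw [he, ← exp_nsmul]
    refine hexp_norm _ ?_
    have : (k:ℕ) • w = ((k:ℝ)) • w := (Nat.cast_smul_eq_nsmul ℝ k w).symm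
    rw [this, norm_smul, Real.norm_eq_abs, Nat.abs_cast]
    have hk' : (k:ℝ) ≤ (M:ℝ) := by exact_mod_cast hk
    calc (k:ℝ) * ‖w‖ ≤ (M:ℝ) * (s / M) := by
          apply mul_le_mul hk' hnw (norm_nonneg w) (le_of_lt hM0)
      _ = s := by field_simp
  -- telescoping estimate
  set X : ℝ := 1 + F * δ with hX
  have hX1 : (1:ℝ) ≤ X := by rw [hX]; nlinarith
  have hX0 : (0:ℝ) ≤ X := by linarith
  have hphi : ∀ n : ℕ, n ≤ M →
      (∑ k ∈ Finset.range n, (‖p ^ k - e ^ k‖ + F)) ≤ n * F * X ^ n := by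
    intro n
    induction n with
    | zero => intro _; simp
    | succ n ih =>
      intro hn
      have hn' : n ≤ M := Nat.le_of_succ_le hn
      have hφ := ih hn'
      have hd : ‖p ^ n - e ^ n‖ ≤ δ * F * (n * F * X ^ n) := by
        rw [pow_sub_pow_eq' p e n]
        refine (norm_sum_le _ _).trans ?_
        have hterm : ∀ k ∈ Finset.range n,
            ‖p ^ k * (p - e) * e ^ (n - 1 - k)‖ ≤ δ * F * (‖p ^ k - e ^ k‖ + F) := by
          intro k hk
          rw [Finset.mem_range] at hk
          have hpk : ‖p ^ k‖ ≤ ‖p ^ k - e ^ k‖ + F := by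
            have := norm_add_le (p ^ k - e ^ k) (e ^ k)
            have h2 := hEk k (le_trans (le_of_lt hk) hn')
            simpa using (by linarith : ‖p ^ k - e ^ k + e ^ k‖ ≤ ‖p ^ k - e ^ k‖ + F)
          have h3 : ‖e ^ (n - 1 - k)‖ ≤ F := hEk _ (by omega)
          calc ‖p ^ k * (p - e) * e ^ (n - 1 - k)‖
              ≤ ((‖p ^ k - e ^ k‖ + F) * δ) * F :=
                nmul (nmul hpk le_rfl (by positivity)) h3 (by positivity)
            _ = δ * F * (‖p ^ k - e ^ k‖ + F) := by ring
        calc ∑ k ∈ Finset.range n, ‖p ^ k * (p - e) * e ^ (n - 1 - k)‖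
            ≤ ∑ k ∈ Finset.range n, δ * F * (‖p ^ k - e ^ k‖ + F) :=
              Finset.sum_le_sum hterm
          _ = δ * F * ∑ k ∈ Finset.range n, (‖p ^ k - e ^ k‖ + F) := by
              rw [Finset.mul_sum]
          _ ≤ δ * F * (n * F * X ^ n) := by
              apply mul_le_mul_of_nonneg_left hφ (by positivity)
      rw [Finset.sum_range_succ]
      have hXpow : X ^ n ≤ X ^ (n+1) := pow_le_pow_right₀ hX1 (Nat.le_succ n)
      have hXpow1 : (1:ℝ) ≤ X ^ (n+1) := one_le_pow₀ hX1
      calc (∑ k ∈ Finset.range n, (‖p ^ k - e ^ k‖ + F)) + (‖p ^ n - e ^ n‖ + F)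
          ≤ n * F * X ^ n + (δ * F * (n * F * X ^ n) + F) := by linarith
        _ = n * F * X ^ n * (1 + F * δ) + F := by ring
        _ = n * F * X ^ (n+1) + F := by rw [hX, pow_succ]; ring
        _ ≤ ((n:ℝ)+1) * F * X ^ (n+1) := by nlinarith
        _ = ((n+1 : ℕ):ℝ) * F * X ^ (n+1) := by push_cast; ring
  have hfinal : ‖p ^ M - e ^ M‖ ≤ δ * F * (M * F * X ^ M) := by
    rw [pow_sub_pow_eq' p e M]
    refine (norm_sum_le _ _).trans ?_
    have hterm : ∀ k ∈ Finset.range M,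
        ‖p ^ k * (p - e) * e ^ (M - 1 - k)‖ ≤ δ * F * (‖p ^ k - e ^ k‖ + F) := by
      intro k hk
      rw [Finset.mem_range] at hk
      have hpk : ‖p ^ k‖ ≤ ‖p ^ k - e ^ k‖ + F := by
        have := norm_add_le (p ^ k - e ^ k) (e ^ k)
        have h2 := hEk k (le_of_lt hk)
        simpa using (by linarith : ‖p ^ k - e ^ k + e ^ k‖ ≤ ‖p ^ k - e ^ k‖ + F)
      have h3 : ‖e ^ (M - 1 - k)‖ ≤ F := hEk _ (by omega)
      calc ‖p ^ k * (p - e) * e ^ (M - 1 - k)‖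
          ≤ ((‖p ^ k - e ^ k‖ + F) * δ) * F :=
            nmul (nmul hpk le_rfl (by positivity)) h3 (by positivity)
        _ = δ * F * (‖p ^ k - e ^ k‖ + F) := by ring
    calc ∑ k ∈ Finset.range M, ‖p ^ k * (p - e) * e ^ (M - 1 - k)‖
        ≤ ∑ k ∈ Finset.range M, δ * F * (‖p ^ k - e ^ k‖ + F) := Finset.sum_le_sum hterm
      _ = δ * F * ∑ k ∈ Finset.range M, (‖p ^ k - e ^ k‖ + F) := by rw [Finset.mul_sum]
      _ ≤ δ * F * (M * F * X ^ M) := by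
          apply mul_le_mul_of_nonneg_left (hphi M le_rfl) (by positivity)
  -- identify e^M with the target exponential
  have heM : e ^ M = exp (h • (A + B)) := by
    letI : NormedAlgebra ℚ 𝒜 := NormedAlgebra.restrictScalars ℚ ℝ 𝒜
    rw [he, ← exp_nsmul]
    congr 1
    have : (M:ℕ) • w = ((M:ℝ)) • w := (Nat.cast_smul_eq_nsmul ℝ M w).symm
    rw [this, hw_def, smul_smul]
    congr 1
    field_simp
  -- bound X^M
  have hXM : X ^ M ≤ Real.exp (F * (s^3 * K₁)) := by
    have h1 : X ≤ Real.exp (F * δ) := by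
      rw [hX]
      have := Real.add_one_le_exp (F * δ)
      linarith
    have h2 : X ^ M ≤ Real.exp (F * δ) ^ M :=
      pow_le_pow_left₀ hX0 h1 M
    rw [← Real.exp_nat_mul] at h2
    refine h2.trans (Real.exp_le_exp.2 ?_)
    have hδb : δ ≤ s^3 * K₁ / M^3 := hδ
    calc (M:ℝ) * (F * δ) ≤ (M:ℝ) * (F * (s^3 * K₁ / M^3)) := by
          apply mul_le_mul_of_nonneg_left (mul_le_mul_of_nonneg_left hδb hF0) (le_of_lt hM0)
      _ = F * (s^3 * K₁) / M^2 := by field_simp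
      _ ≤ F * (s^3 * K₁) := by
          apply div_le_self (by positivity)
          nlinarith
  -- conclude
  rw [← heM]
  refine hfinal.trans ?_
  calc δ * F * (M * F * X ^ M)
      ≤ (s^3 * K₁ / M^3) * F * (M * F * Real.exp (F * (s^3 * K₁))) := by
        apply mul_le_mul
        · exact mul_le_mul_of_nonneg_right hδ hF0
        · apply mul_le_mul_of_nonneg_left hXM (by positivity)
        · positivity
        · positivity
    _ = F^2 * (s^3 * K₁) * Real.exp (F * (s^3 * K₁)) / M^2 := by
        field_simp
end

section
/- Let ι be a finite index type, η : ι → ℂ a fixed vector, and D : ℝ → Matrix(ι,ι,ℂ) a differentiable matrix-valued function such that D(t) is invertible for every t. Define χ(t) = (D(t)ᴴ)⁻¹ η, ξ(t) = D(t)⁻¹ χ(t), and the pseudofermion action S(t) = ηᴴ (D(t)ᴴ D(t))⁻¹ η (a real number). Then S is differentiable and S′(t) = −2 Re( χ(t)ᴴ · D′(t) · ξ(t) ) for every t, where D′(t) is the entrywise derivative of D at t. -/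
open Matrix Filter Topology

/-- Entrywise derivative of the inverse of a matrix-valued function. -/
private lemma matrix_inv_entry_hasDerivAt {ι : Type*} [Fintype ι] [DecidableEq ι]
    (N : ℝ → Matrix ι ι ℂ) (N' : Matrix ι ι ℂ) (t : ℝ)
    (hu : ∀ s, IsUnit (N s))
    (hN : ∀ i j, HasDerivAt (fun s => N s i j) (N' i j) t) (i j : ι) :
    HasDerivAt (fun s => (N s)⁻¹ i j) ((-((N t)⁻¹ * N' * (N t)⁻¹)) i j) t := by
  have hdet : ∀ s, IsUnit (N s).det := fun s => (Matrix.isUnit_iff_isUnit_det _).mp (hu s)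
  -- continuity of the inverse at `t`
  have hNc : ContinuousAt N t :=
    continuousAt_pi.2 fun i => continuousAt_pi.2 fun j => (hN i j).continuousAt
  have hGc : ContinuousAt (fun s => (N s)⁻¹) t := by
    have h1 : ContinuousAt Ring.inverse (N t).det := by
      rw [Ring.inverse_eq_inv']
      exact continuousAt_inv₀ (hdet t).ne_zero
    exact (continuousAt_matrix_inv (N t) h1).comp hNc
  have hGce : ∀ k l, ContinuousAt (fun s => (N s)⁻¹ k l) t := by
    intro k l
    exact (((continuous_apply l).comp (continuous_apply k)).continuousAt).comp hGc
  rw [hasDerivAt_iff_tendsto_slope]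
  have hslope : ∀ s, slope (fun r => (N r)⁻¹ i j) t s
      = ∑ l, (∑ k, (N s)⁻¹ i k * (-(slope (fun r => N r k l) t s))) * (N t)⁻¹ l j := by
    intro s
    have hid : (N s)⁻¹ - (N t)⁻¹ = (N s)⁻¹ * (N t - N s) * (N t)⁻¹ := by
      rw [Matrix.mul_sub, Matrix.sub_mul, Matrix.nonsing_inv_mul _ (hdet s),
        Matrix.mul_assoc, Matrix.mul_nonsing_inv _ (hdet t), Matrix.mul_one, Matrix.one_mul]
    have hs : ∀ (k l : ι), -(slope (fun r => N r k l) t s)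
        = (s - t)⁻¹ • (N t k l - N s k l) := by
      intro k l
      rw [slope, vsub_eq_sub, ← smul_neg, neg_sub]
    rw [slope, vsub_eq_sub]
    have hLHS : (fun r => (N r)⁻¹ i j) s - (fun r => (N r)⁻¹ i j) t
        = ((N s)⁻¹ * (N t - N s) * (N t)⁻¹) i j := by
      rw [← hid]; simp [Matrix.sub_apply]
    rw [hLHS]
    simp only [hs, mul_smul_comm, ← Finset.smul_sum, smul_mul_assoc]
    try congr 1
    try simp [Matrix.mul_apply, Matrix.sub_apply]
  have htarget : (-((N t)⁻¹ * N' * (N t)⁻¹)) i j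
      = ∑ l, (∑ k, (N t)⁻¹ i k * (-(N' k l))) * (N t)⁻¹ l j := by
    simp [Matrix.mul_apply, Matrix.neg_apply, mul_neg, neg_mul, Finset.sum_neg_distrib]
  rw [funext hslope, htarget]
  apply tendsto_finset_sum
  intro l _
  apply Tendsto.mul_const
  apply tendsto_finset_sum
  intro k _
  exact ((hGce i k).tendsto.mono_left nhdsWithin_le_nhds).mul
    (((hasDerivAt_iff_tendsto_slope.mp (hN k l)).neg))

/-- The fermion force formula: for `S(t) = ηᴴ (D(t)ᴴ D(t))⁻¹ η` (a real number) with `D(t)`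
invertible and entrywise differentiable, `S` is differentiable with
`S′(t) = −2 Re(χ(t)ᴴ · D′(t) · ξ(t))`, where `χ(t) = (D(t)ᴴ)⁻¹ η`, `ξ(t) = D(t)⁻¹ χ(t)` and
`D′(t)` is the entrywise derivative. -/
theorem fermion_force {ι : Type*} [Fintype ι] [DecidableEq ι]
    (η : ι → ℂ) (D : ℝ → Matrix ι ι ℂ)
    (hD : ∀ i j, Differentiable ℝ fun t => D t i j)
    (hinv : ∀ t, IsUnit (D t)) (t : ℝ) :
    HasDerivAt (fun s => (star η ⬝ᵥ (((D s)ᴴ * D s)⁻¹ *ᵥ η)).re)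
      (-2 * (star (((D t)ᴴ)⁻¹ *ᵥ η) ⬝ᵥ
          ((Matrix.of fun i j => deriv (fun s => D s i j) t) *ᵥ
            ((D t)⁻¹ *ᵥ (((D t)ᴴ)⁻¹ *ᵥ η)))).re) t := by
  set A : Matrix ι ι ℂ := D t with hA
  set A' : Matrix ι ι ℂ := Matrix.of fun i j => deriv (fun s => D s i j) t with hA'
  set N : ℝ → Matrix ι ι ℂ := fun s => (D s)ᴴ * D s with hNdef
  set N' : Matrix ι ι ℂ := A'ᴴ * A + Aᴴ * A' with hN'def
  have hD' : ∀ i j, HasDerivAt (fun s => D s i j) (A' i j) t := fun i j =>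
    ((hD i j) t).hasDerivAt
  have huN : ∀ s, IsUnit (N s) := fun s =>
    (((Matrix.isUnit_conjTranspose (D s)).mpr (hinv s)).mul (hinv s))
  have hNd : ∀ i j, HasDerivAt (fun s => N s i j) (N' i j) t := by
    intro i j
    have h1 : ∀ s, N s i j = ∑ k, star (D s k i) * D s k j := by
      intro s; simp [hNdef, Matrix.mul_apply, Matrix.conjTranspose_apply]
    have h2 : N' i j = ∑ k, (star (A' k i) * D t k j + star (D t k i) * A' k j) := by
      simp [hN'def, Matrix.add_apply, Matrix.mul_apply, Matrix.conjTranspose_apply,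
        Finset.sum_add_distrib, hA]
    rw [funext h1, h2]
    exact HasDerivAt.fun_sum fun k _ => ((hD' k i).star).mul (hD' k j)
  set G : Matrix ι ι ℂ := (N t)⁻¹ with hG
  have hGinv := matrix_inv_entry_hasDerivAt N N' t huN hNd
  have hf : HasDerivAt (fun s => star η ⬝ᵥ ((N s)⁻¹ *ᵥ η))
      (star η ⬝ᵥ ((-(G * N' * G)) *ᵥ η)) t := by
    simp only [dotProduct, Matrix.mulVec]
    exact HasDerivAt.fun_sum fun i _ =>
      ((HasDerivAt.fun_sum fun j _ => ((hGinv i j).mul_const (η j))).const_mul (star (η i)))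
  have hre : HasDerivAt (fun s => (star η ⬝ᵥ ((N s)⁻¹ *ᵥ η)).re)
      ((star η ⬝ᵥ ((-(G * N' * G)) *ᵥ η)).re) t :=
    Complex.reCLM.hasFDerivAt.comp_hasDerivAt t hf
  convert hre using 2
  -- remains: equality of the derivative values
  set χ : ι → ℂ := (Aᴴ)⁻¹ *ᵥ η with hχ
  set ξ : ι → ℂ := A⁻¹ *ᵥ χ with hξ
  set b : ℂ := star χ ⬝ᵥ (A' *ᵥ ξ) with hb
  have hdetA : IsUnit A.det := (Matrix.isUnit_iff_isUnit_det _).mp (hinv t)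
  have hdetAH : IsUnit (Aᴴ).det :=
    (Matrix.isUnit_iff_isUnit_det _).mp ((Matrix.isUnit_conjTranspose (D t)).mpr (hinv t))
  have hGval : G = A⁻¹ * (Aᴴ)⁻¹ := by
    show ((D t)ᴴ * D t)⁻¹ = A⁻¹ * (Aᴴ)⁻¹
    rw [Matrix.mul_inv_rev]
  have hGH : Gᴴ = G := by
    show ((D t)ᴴ * D t)⁻¹ᴴ = ((D t)ᴴ * D t)⁻¹
    rw [Matrix.conjTranspose_nonsing_inv, Matrix.conjTranspose_mul,
      Matrix.conjTranspose_conjTranspose]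
  have hGη : G *ᵥ η = ξ := by
    rw [hGval, hξ, hχ, ← Matrix.mulVec_mulVec]
  have hAξ : A *ᵥ ξ = χ := by
    rw [hξ, Matrix.mulVec_mulVec, Matrix.mul_nonsing_inv _ hdetA, Matrix.one_mulVec]
  have hstarξG : star η ᵥ* G = star ξ := by
    rw [← hGη, Matrix.star_mulVec, hGH]
  have key : star η ⬝ᵥ ((G * N' * G) *ᵥ η) = star b + b := by
    rw [← Matrix.mulVec_mulVec, ← Matrix.mulVec_mulVec, hGη, Matrix.dotProduct_mulVec,
      hstarξG, hN'def, Matrix.add_mulVec, ← Matrix.mulVec_mulVec, ← Matrix.mulVec_mulVec,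
      hAξ, dotProduct_add]
    have term2 : star ξ ⬝ᵥ (Aᴴ *ᵥ (A' *ᵥ ξ)) = b := by
      rw [Matrix.dotProduct_mulVec, ← Matrix.star_mulVec, hAξ, hb]
    have term1 : star ξ ⬝ᵥ (A'ᴴ *ᵥ χ) = star b := by
      rw [Matrix.dotProduct_mulVec, ← Matrix.star_mulVec, hb, star_dotProduct]
    rw [term1, term2]
  have : star η ⬝ᵥ ((-(G * N' * G)) *ᵥ η) = -(star b + b) := by
    rw [Matrix.neg_mulVec, dotProduct_neg, key]
  rw [this]
  simp [Complex.add_re, Complex.neg_re, Complex.conj_re]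
  try ring
end
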